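/- Let {X_t} be a stationary Markov chain on a finite set A = {1,...,n} with transition matrix a_{ij} > 0 for all i, j, and let θ(x_1^l) ∈ S_{n²} be the non-cyclic empirical doublet measure θ_{ij}(x_1^l) = (1/(l−1)) Σ_{t=1}^{l−1} 1{x_t x_{t+1} = ij}. Then {θ(x_1^l)} satisfies the large deviation property with rate function I(θ) = Σ_{i∈A} θ̄_i Σ_{j∈A} b_{ij} log(b_{ij}/a_{ij}) for θ ∈ M_s(A²) (where θ̄_i = Σ_j θ_{ij} and b_{ij} = θ_{ij}/θ̄_i), and I(θ) = +∞ for θ ∈ S_{n²} \ M_s(A²). -/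

import Mathlib

open Finset Filter

/-- The simplex `S_{n²}` of probability distributions on `A²`. -/
def simplex2 (n : ℕ) : Set (Fin n → Fin n → ℝ) :=
  {θ | (∀ i j, 0 ≤ θ i j) ∧ ∑ i, ∑ j, θ i j = 1}

/-- Stationary distributions on `A²`: equal row and column sums. -/
def IsStat2 {n : ℕ} (θ : Fin n → Fin n → ℝ) : Prop :=
  ∀ i, ∑ j, θ i j = ∑ j, θ j i

/-- Marginal of a doublet distribution. -/
def marg {n : ℕ} (θ : Fin n → Fin n → ℝ) : Fin n → ℝ := fun i => ∑ j, θ i j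

/-- The non-cyclic empirical doublet measure
`θ_{ij}(x_1^l) = (1/(l−1)) Σ_{t=1}^{l−1} 1{x_t x_{t+1} = ij}` on paths of length
`l = m+2`. -/
noncomputable def empNC {n m : ℕ} (x : Fin (m+2) → Fin n) : Fin n → Fin n → ℝ :=
  fun i j => (∑ t : Fin (m+1), if x t.castSucc = i ∧ x t.succ = j then (1:ℝ) else 0) / (m+1)

/-- Law of the stationary Markov chain with stationary distribution `π` and transition
matrix `a` on paths of length `k+1`. -/
noncomputable def pathPA {n : ℕ} (π : Fin n → ℝ) (a : Fin n → Fin n → ℝ) {k : ℕ}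
    (x : Fin (k+1) → Fin n) : ℝ :=
  π (x 0) * ∏ t : Fin k, a (x t.castSucc) (x t.succ)

open scoped Classical in
/-- `Pr{θ(x_1^l) ∈ Γ}` over paths of length `l = m+2`. -/
noncomputable def prEventNC {n : ℕ} (π : Fin n → ℝ) (a : Fin n → Fin n → ℝ) (m : ℕ)
    (Γ : Set (Fin n → Fin n → ℝ)) : ℝ :=
  ∑ x : Fin (m+2) → Fin n, if empNC x ∈ Γ then pathPA π a x else 0

/-- Extended-real logarithm, `elog p = −∞` for `p ≤ 0`. -/
noncomputable def elog (p : ℝ) : EReal := if p ≤ 0 then ⊥ else ((Real.log p : ℝ) : EReal)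

open scoped Classical in
/-- The rate function: `I(θ) = Σ_i θ̄_i Σ_j b_{ij} log(b_{ij}/a_{ij})` for stationary
`θ` (with `b_{ij} = θ_{ij}/θ̄_i`), and `I(θ) = +∞` otherwise. -/
noncomputable def rate16 {n : ℕ} (a : Fin n → Fin n → ℝ) (θ : Fin n → Fin n → ℝ) : EReal :=
  if IsStat2 θ then
    (((∑ i, marg θ i *
        ∑ j, (θ i j / marg θ i) * Real.log ((θ i j / marg θ i) / a i j)) : ℝ) : EReal)
  else ⊤

/-- ℓ¹ (total variation) distance. -/
def dist2v {n : ℕ} (θ ξ : Fin n → Fin n → ℝ) : ℝ := ∑ i, ∑ j, |θ i j - ξ i j|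

def OpenIn2 {n : ℕ} (S Γ : Set (Fin n → Fin n → ℝ)) : Prop :=
  ∀ ζ ∈ Γ, ∃ ε > 0, ∀ ξ ∈ S, dist2v ξ ζ < ε → ξ ∈ Γ

def ClosedIn2 {n : ℕ} (S Γ : Set (Fin n → Fin n → ℝ)) : Prop := OpenIn2 S (S \ Γ)

namespace Stmt16Aux

open scoped Classical

variable {n : ℕ}

/-- transition counts of a path -/
noncomputable def Nc {n m : ℕ} (x : Fin (m+2) → Fin n) (i j : Fin n) : ℕ :=
  (univ.filter (fun t : Fin (m+1) => x t.castSucc = i ∧ x t.succ = j)).card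

lemma empNC_eq {m : ℕ} (x : Fin (m+2) → Fin n) (i j : Fin n) :
    empNC x i j = (Nc x i j : ℝ) / ((m:ℝ)+1) := by
  unfold empNC Nc
  rw [Finset.sum_boole]

lemma Nc_le {m : ℕ} (x : Fin (m+2) → Fin n) (i j : Fin n) : Nc x i j ≤ m+1 := by
  classical
  simpa [Nc] using (Finset.card_filter_le univ (fun t : Fin (m+1) => x t.castSucc = i ∧ x t.succ = j))

lemma empNC_nonneg {m : ℕ} (x : Fin (m+2) → Fin n) (i j : Fin n) : 0 ≤ empNC x i j := by
  rw [empNC_eq]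
  positivity

lemma sum_ite_pair_left (P : Prop) [Decidable P] (q : Fin n) :
    (∑ j, if P ∧ q = j then (1:ℝ) else 0) = if P then 1 else 0 := by
  by_cases hP : P <;> simp [hP, ite_and, Finset.sum_ite_eq]

lemma sum_ite_pair_right (P : Prop) [Decidable P] (p : Fin n) :
    (∑ j, if p = j ∧ P then (1:ℝ) else 0) = if P then 1 else 0 := by
  by_cases hP : P <;> simp [hP, Finset.sum_ite_eq]

lemma empNC_row {m : ℕ} (x : Fin (m+2) → Fin n) (i : Fin n) :
    ∑ j, empNC x i j = (∑ t : Fin (m+1), if x t.castSucc = i then (1:ℝ) else 0) / ((m:ℝ)+1) := by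
  unfold empNC
  rw [← Finset.sum_div]
  congr 1
  rw [Finset.sum_comm]
  exact Finset.sum_congr rfl fun t _ => sum_ite_pair_left _ _

lemma empNC_col {m : ℕ} (x : Fin (m+2) → Fin n) (i : Fin n) :
    ∑ j, empNC x j i = (∑ t : Fin (m+1), if x t.succ = i then (1:ℝ) else 0) / ((m:ℝ)+1) := by
  unfold empNC
  rw [← Finset.sum_div]
  congr 1
  rw [Finset.sum_comm]
  exact Finset.sum_congr rfl fun t _ => sum_ite_pair_right _ _

lemma empNC_mem_simplex {m : ℕ} (x : Fin (m+2) → Fin n) : empNC x ∈ simplex2 n := by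
  refine ⟨fun i j => empNC_nonneg x i j, ?_⟩
  have h : ∀ i, ∑ j, empNC x i j
      = (∑ t : Fin (m+1), if x t.castSucc = i then (1:ℝ) else 0) / ((m:ℝ)+1) :=
    empNC_row x
  rw [Finset.sum_congr rfl fun i _ => h i, ← Finset.sum_div, Finset.sum_comm]
  have h2 : ∀ t : Fin (m+1), (∑ i, if x t.castSucc = i then (1:ℝ) else 0) = 1 := by
    intro t; simp [Finset.sum_ite_eq]
  rw [Finset.sum_congr rfl fun t _ => h2 t]
  have : ((m:ℝ)+1) ≠ 0 := by positivity
  simp [this]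

lemma empNC_gap {m : ℕ} (x : Fin (m+2) → Fin n) (i : Fin n) :
    |∑ j, empNC x i j - ∑ j, empNC x j i| ≤ 2/((m:ℝ)+1) := by
  rw [empNC_row, empNC_col, div_sub_div_same, abs_div]
  have hm : (0:ℝ) < (m:ℝ)+1 := by positivity
  rw [abs_of_pos hm]
  set G : Fin (m+2) → ℝ := fun s => if x s = i then (1:ℝ) else 0 with hG
  have hA : (∑ s : Fin (m+2), G s) = (∑ t : Fin (m+1), G t.castSucc) + G (Fin.last (m+1)) :=
    Fin.sum_univ_castSucc G
  have hB : (∑ s : Fin (m+2), G s) = G 0 + (∑ t : Fin (m+1), G t.succ) :=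
    Fin.sum_univ_succ G
  have hkey : |(∑ t : Fin (m+1), G t.castSucc) - (∑ t : Fin (m+1), G t.succ)| ≤ 2 := by
    have h1 : (∑ t : Fin (m+1), G t.castSucc) - (∑ t : Fin (m+1), G t.succ)
        = G 0 - G (Fin.last (m+1)) := by linarith
    rw [h1, hG]
    by_cases h2 : x 0 = i <;> by_cases h3 : x (Fin.last (m+1)) = i <;>
      simp [h2, h3] <;> norm_num
  gcongr


lemma prod_steps {m : ℕ} (g : Fin n → Fin n → ℝ) (x : Fin (m+2) → Fin n) :
    ∏ t : Fin (m+1), g (x t.castSucc) (x t.succ) = ∏ i, ∏ j, g i j ^ Nc x i j := by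
  classical
  have h := Finset.prod_fiberwise_of_maps_to (s := (univ : Finset (Fin (m+1))))
      (t := (univ : Finset (Fin n × Fin n)))
      (g := fun t => (x t.castSucc, x t.succ))
      (fun t _ => Finset.mem_univ _)
      (fun t => g (x t.castSucc) (x t.succ))
  rw [← h, Fintype.prod_prod_type]
  refine Finset.prod_congr rfl fun i _ => Finset.prod_congr rfl fun j _ => ?_
  have h1 : ∀ t ∈ univ.filter (fun t : Fin (m+1) => (x t.castSucc, x t.succ) = (i, j)),
      g (x t.castSucc) (x t.succ) = g i j := by
    intro t ht
    simp only [Finset.mem_filter, Prod.mk.injEq] at ht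
    rw [ht.2.1, ht.2.2]
  rw [Finset.prod_congr rfl h1, Finset.prod_const]
  congr 1
  unfold Nc
  congr 1
  apply Finset.filter_congr
  intro t _
  simp [Prod.ext_iff]

lemma pathPA_nonneg {k : ℕ} (μ : Fin n → ℝ) (b : Fin n → Fin n → ℝ)
    (hμ : ∀ i, 0 ≤ μ i) (hb : ∀ i j, 0 ≤ b i j) (x : Fin (k+1) → Fin n) :
    0 ≤ pathPA μ b x := by
  exact mul_nonneg (hμ _) (Finset.prod_nonneg fun t _ => hb _ _)

lemma pathPA_cons {k : ℕ} (μ : Fin n → ℝ) (b : Fin n → Fin n → ℝ) (i : Fin n)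
    (y : Fin (k+1) → Fin n) :
    pathPA μ b (Fin.cons i y) = μ i * pathPA (fun j => b i j) b y := by
  unfold pathPA
  rw [Fin.prod_univ_succ]
  have h0 : (Fin.cons i y : Fin (k+2) → Fin n) ((0 : Fin (k+1)).castSucc) = i := by
    simp
  have h1 : (Fin.cons i y : Fin (k+2) → Fin n) ((0 : Fin (k+1)).succ) = y 0 := by
    rw [Fin.cons_succ]
  have h2 : ∀ t : Fin k,
      (Fin.cons i y : Fin (k+2) → Fin n) ((t.succ).castSucc) = y t.castSucc := by
    intro t
    rw [← Fin.succ_castSucc, Fin.cons_succ]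
  have h3 : ∀ t : Fin k,
      (Fin.cons i y : Fin (k+2) → Fin n) ((t.succ).succ) = y t.succ := by
    intro t
    rw [Fin.cons_succ]
  rw [h0, h1, Finset.prod_congr rfl (fun t _ => by rw [h2 t, h3 t])]
  simp [Fin.cons_zero]

lemma sum_pathPA (b : Fin n → Fin n → ℝ) (hb1 : ∀ i, ∑ j, b i j = 1) :
    ∀ (k : ℕ) (μ : Fin n → ℝ), (∑ i, μ i) = 1 →
      ∑ x : Fin (k+1) → Fin n, pathPA μ b x = 1 := by
  intro k
  induction k with
  | zero =>
    intro μ hμ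
    rw [← hμ]
    apply Fintype.sum_equiv (Equiv.funUnique (Fin 1) (Fin n))
    intro x
    simp [pathPA, Equiv.funUnique]
  | succ k ih =>
    intro μ hμ
    rw [← Equiv.sum_comp (Fin.consEquiv (fun _ : Fin (k+2) => Fin n))
      (fun x => pathPA μ b x)]
    have he : ∀ p : Fin n × (Fin (k+1) → Fin n),
        pathPA μ b ((Fin.consEquiv (fun _ : Fin (k+2) => Fin n)) p)
          = μ p.1 * pathPA (fun j => b p.1 j) b p.2 := by
      intro p
      show pathPA μ b (Fin.cons p.1 p.2) = _
      rw [pathPA_cons]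
    rw [Fintype.sum_prod_type, Finset.sum_congr rfl (fun i _ => Finset.sum_congr rfl
      (fun y _ => he (i, y)))]
    have : ∀ i : Fin n, ∑ y : Fin (k+1) → Fin n, μ i * pathPA (fun j => b i j) b y
        = μ i := by
      intro i
      rw [← Finset.mul_sum, ih (fun j => b i j) (hb1 i), mul_one]
    rw [Finset.sum_congr rfl (fun i _ => this i), hμ]

/-- empirical transition kernel associated to a doublet distribution, with default `a`
on zero rows. -/
noncomputable def bker (a θ : Fin n → Fin n → ℝ) (i j : Fin n) : ℝ :=
  if marg θ i = 0 then a i j else θ i j / marg θ i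

/-- `Σ_{ij} θ_{ij} log (b_{ij}/a_{ij})`, the rate expression. -/
noncomputable def Isum (a θ : Fin n → Fin n → ℝ) : ℝ :=
  ∑ i, ∑ j, θ i j * Real.log (bker a θ i j / a i j)

lemma marg_nonneg {θ : Fin n → Fin n → ℝ} (hθ : ∀ i j, 0 ≤ θ i j) (i : Fin n) :
    0 ≤ marg θ i :=
  Finset.sum_nonneg fun j _ => hθ i j

lemma le_marg {θ : Fin n → Fin n → ℝ} (hθ : ∀ i j, 0 ≤ θ i j) (i j : Fin n) :
    θ i j ≤ marg θ i :=
  Finset.single_le_sum (fun j _ => hθ i j) (Finset.mem_univ j)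

lemma bker_nonneg {a θ : Fin n → Fin n → ℝ} (ha : ∀ i j, 0 < a i j)
    (hθ : ∀ i j, 0 ≤ θ i j) (i j : Fin n) : 0 ≤ bker a θ i j := by
  unfold bker
  split
  · exact (ha i j).le
  · exact div_nonneg (hθ i j) (marg_nonneg hθ i)

lemma bker_row {a θ : Fin n → Fin n → ℝ} (harow : ∀ i, ∑ j, a i j = 1) (i : Fin n) :
    ∑ j, bker a θ i j = 1 := by
  unfold bker
  by_cases h : marg θ i = 0
  · simp [h, harow i]
  · simp only [h, if_false]
    rw [← Finset.sum_div]
    exact div_self h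

lemma bker_pos {a θ : Fin n → Fin n → ℝ} (hθ : ∀ i j, 0 ≤ θ i j)
    {i j : Fin n} (hij : 0 < θ i j) : bker a θ i j = θ i j / marg θ i ∧ 0 < bker a θ i j := by
  have hm : 0 < marg θ i := lt_of_lt_of_le hij (le_marg hθ i j)
  unfold bker
  rw [if_neg (ne_of_gt hm)]
  exact ⟨rfl, div_pos hij hm⟩

/-- the key pointwise decomposition of the path probability through the empirical type -/
lemma pathPA_decomp {m : ℕ} (a : Fin n → Fin n → ℝ) (hapos : ∀ i j, 0 < a i j)
    (π : Fin n → ℝ) (x : Fin (m+2) → Fin n) :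
    pathPA π a x =
      Real.exp (-(((m:ℝ)+1)) * Isum a (empNC x)) * pathPA π (bker a (empNC x)) x := by
  classical
  set θ := empNC x with hθdef
  have hθ0 : ∀ i j, 0 ≤ θ i j := fun i j => empNC_nonneg x i j
  have hm1 : ((m:ℝ)+1) ≠ 0 := by positivity
  have key : ∀ i j, a i j ^ Nc x i j
      = Real.exp (-(((m:ℝ)+1)) * (θ i j * Real.log (bker a θ i j / a i j)))
        * bker a θ i j ^ Nc x i j := by
    intro i j
    rcases Nat.eq_zero_or_pos (Nc x i j) with h0 | hpos
    · have : θ i j = 0 := by rw [hθdef, empNC_eq, h0]; simp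
      simp [h0, this]
    · have hθpos : 0 < θ i j := by
        rw [hθdef, empNC_eq]
        positivity
      obtain ⟨hbe, hbpos⟩ := bker_pos (a := a) hθ0 hθpos
      have hθN : ((m:ℝ)+1) * θ i j = (Nc x i j : ℝ) := by
        rw [hθdef, empNC_eq]; field_simp
      have hlog : Real.log (bker a θ i j / a i j)
          = Real.log (bker a θ i j) - Real.log (a i j) :=
        Real.log_div (ne_of_gt hbpos) (ne_of_gt (hapos i j))
      have ha' : a i j ^ Nc x i j = Real.exp ((Nc x i j : ℝ) * Real.log (a i j)) := by
        rw [Real.exp_nat_mul, Real.exp_log (hapos i j)]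
      have hb' : bker a θ i j ^ Nc x i j
          = Real.exp ((Nc x i j : ℝ) * Real.log (bker a θ i j)) := by
        rw [Real.exp_nat_mul, Real.exp_log hbpos]
      rw [ha', hb', hlog, ← Real.exp_add]
      congr 1
      have : -(((m:ℝ)+1)) * (θ i j * (Real.log (bker a θ i j) - Real.log (a i j)))
          = -((((m:ℝ)+1) * θ i j) * (Real.log (bker a θ i j) - Real.log (a i j))) := by ring
      rw [this, hθN]
      ring
  unfold pathPA
  rw [prod_steps a x, prod_steps (bker a θ) x]
  rw [Finset.prod_congr rfl fun i _ => Finset.prod_congr rfl fun j _ => key i j]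
  have hsplit : ∏ i, ∏ j, (Real.exp (-(((m:ℝ)+1)) * (θ i j * Real.log (bker a θ i j / a i j)))
        * bker a θ i j ^ Nc x i j)
      = (∏ i, ∏ j, Real.exp (-(((m:ℝ)+1)) * (θ i j * Real.log (bker a θ i j / a i j))))
        * ∏ i, ∏ j, bker a θ i j ^ Nc x i j := by
    rw [← Finset.prod_mul_distrib]
    exact Finset.prod_congr rfl fun i _ => Finset.prod_mul_distrib
  rw [hsplit]
  have hexp : (∏ i, ∏ j, Real.exp (-(((m:ℝ)+1)) * (θ i j * Real.log (bker a θ i j / a i j))))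
      = Real.exp (-(((m:ℝ)+1)) * Isum a θ) := by
    have h1 : ∀ i : Fin n,
        (∏ j, Real.exp (-(((m:ℝ)+1)) * (θ i j * Real.log (bker a θ i j / a i j))))
        = Real.exp (∑ j, -(((m:ℝ)+1)) * (θ i j * Real.log (bker a θ i j / a i j))) :=
      fun i => (Real.exp_sum _ _).symm
    rw [Finset.prod_congr rfl fun i _ => h1 i, ← Real.exp_sum]
    congr 1
    rw [Isum, Finset.mul_sum]
    exact Finset.sum_congr rfl fun i _ => by rw [Finset.mul_sum]
  rw [hexp]
  ring

lemma prEventNC_nonneg (π a : _) (m : ℕ) (Γ : Set (Fin n → Fin n → ℝ))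
    (hπ0 : ∀ i : Fin n, 0 ≤ π i) (ha0 : ∀ i j, 0 ≤ a i j) :
    0 ≤ prEventNC π a m Γ := by
  unfold prEventNC
  refine Finset.sum_nonneg fun x _ => ?_
  split
  · exact pathPA_nonneg π a hπ0 ha0 x
  · exact le_rfl

/-- the number of empirical types is at most `(m+2)^(n*n)` -/
lemma card_types_le (m : ℕ) :
    ((Finset.image (fun x : Fin (m+2) → Fin n => empNC x) univ).card : ℝ)
      ≤ ((m:ℝ)+2)^(n*n) := by
  classical
  set h : (Fin (m+2) → Fin n) → (Fin n → Fin n → Fin (m+2)) :=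
    fun x i j => ⟨Nc x i j, Nat.lt_succ_of_le (Nc_le x i j)⟩ with hh
  set g : (Fin n → Fin n → Fin (m+2)) → (Fin n → Fin n → ℝ) :=
    fun N i j => ((N i j : ℕ) : ℝ)/((m:ℝ)+1) with hg
  have hcomp : (fun x : Fin (m+2) → Fin n => empNC x) = g ∘ h := by
    funext x
    funext i j
    simp only [Function.comp, hg, hh]
    rw [empNC_eq]
  have himg : Finset.image (fun x : Fin (m+2) → Fin n => empNC x) univ
      = Finset.image g (Finset.image h univ) := by
    rw [Finset.image_image, hcomp]
  rw [himg]
  have h1 : (Finset.image g (Finset.image h univ)).card ≤ (Finset.image h univ).card :=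
    Finset.card_image_le
  have h2 : (Finset.image h univ).card ≤ Fintype.card (Fin n → Fin n → Fin (m+2)) :=
    Finset.card_le_univ _
  have h3 : Fintype.card (Fin n → Fin n → Fin (m+2)) = (m+2)^(n*n) := by
    rw [Fintype.card_fun, Fintype.card_fun]
    simp [pow_mul]
  have : ((Finset.image g (Finset.image h univ)).card : ℝ) ≤ (((m+2)^(n*n) : ℕ) : ℝ) := by
    exact_mod_cast (h1.trans (h2.trans_eq h3))
  refine this.trans ?_
  push_cast
  exact le_rfl

lemma prEvent_exists_bound (π : Fin n → ℝ) (hπ0 : ∀ i, 0 ≤ π i) (hπ1 : ∑ i, π i = 1)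
    (a : Fin n → Fin n → ℝ) (hapos : ∀ i j, 0 < a i j) (harow : ∀ i, ∑ j, a i j = 1)
    (m : ℕ) (Γ : Set (Fin n → Fin n → ℝ))
    (hex : ∃ x : Fin (m+2) → Fin n, empNC x ∈ Γ) :
    ∃ θ : Fin n → Fin n → ℝ, (∃ x : Fin (m+2) → Fin n, empNC x = θ) ∧ θ ∈ Γ ∧
      prEventNC π a m Γ ≤ ((m:ℝ)+2)^(n*n) * Real.exp (-(((m:ℝ)+1)) * Isum a θ) := by
  classical
  set T : Finset (Fin n → Fin n → ℝ) :=
    Finset.image (fun x : Fin (m+2) → Fin n => empNC x) univ with hT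
  set S : Finset (Fin n → Fin n → ℝ) := T.filter (· ∈ Γ) with hS
  have hSne : S.Nonempty := by
    obtain ⟨x, hx⟩ := hex
    exact ⟨empNC x, by
      rw [hS, Finset.mem_filter]
      exact ⟨Finset.mem_image_of_mem _ (Finset.mem_univ x), hx⟩⟩
  obtain ⟨θ0, hθ0S, hmin⟩ := Finset.exists_min_image S (Isum a) hSne
  have hθ0T : θ0 ∈ T := (Finset.mem_filter.1 hθ0S).1
  have hθ0Γ : θ0 ∈ Γ := (Finset.mem_filter.1 hθ0S).2
  obtain ⟨x0, _, hx0⟩ := Finset.mem_image.1 hθ0T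
  refine ⟨θ0, ⟨x0, hx0⟩, hθ0Γ, ?_⟩
  -- fiberwise splitting
  have hfib := Finset.sum_fiberwise_of_maps_to (s := (univ : Finset (Fin (m+2) → Fin n)))
      (t := T) (g := fun x => empNC x)
      (fun x _ => Finset.mem_image_of_mem _ (Finset.mem_univ x))
      (fun x => if empNC x ∈ Γ then pathPA π a x else 0)
  have hfiber_bound : ∀ θ ∈ T,
      (∑ x ∈ univ.filter (fun x : Fin (m+2) → Fin n => empNC x = θ),
        (if empNC x ∈ Γ then pathPA π a x else 0))
      ≤ (if θ ∈ Γ then Real.exp (-(((m:ℝ)+1)) * Isum a θ) else 0) := by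
    intro θ hθT
    obtain ⟨xw, _, hxw⟩ := Finset.mem_image.1 hθT
    have hθ0' : ∀ i j, 0 ≤ θ i j := by
      rw [← hxw]; exact fun i j => empNC_nonneg xw i j
    by_cases hθΓ : θ ∈ Γ
    · rw [if_pos hθΓ]
      have heach : ∀ x ∈ univ.filter (fun x : Fin (m+2) → Fin n => empNC x = θ),
          (if empNC x ∈ Γ then pathPA π a x else 0)
            = Real.exp (-(((m:ℝ)+1)) * Isum a θ) * pathPA π (bker a θ) x := by
        intro x hx
        have hxθ : empNC x = θ := (Finset.mem_filter.1 hx).2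
        rw [if_pos (hxθ ▸ hθΓ), pathPA_decomp a hapos π x, hxθ]
      rw [Finset.sum_congr rfl heach, ← Finset.mul_sum]
      have hsum_le : (∑ x ∈ univ.filter (fun x : Fin (m+2) → Fin n => empNC x = θ),
            pathPA π (bker a θ) x) ≤ 1 := by
        have h1 : (∑ x ∈ univ.filter (fun x : Fin (m+2) → Fin n => empNC x = θ),
              pathPA π (bker a θ) x)
            ≤ ∑ x : Fin (m+2) → Fin n, pathPA π (bker a θ) x := by
          refine Finset.sum_le_sum_of_subset_of_nonneg (Finset.filter_subset _ _)
            fun x _ _ => pathPA_nonneg π (bker a θ) hπ0 (bker_nonneg hapos hθ0') x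
        rw [sum_pathPA (bker a θ) (bker_row harow) (m+1) π hπ1] at h1
        exact h1
      calc Real.exp (-(((m:ℝ)+1)) * Isum a θ) *
            (∑ x ∈ univ.filter (fun x : Fin (m+2) → Fin n => empNC x = θ),
              pathPA π (bker a θ) x)
          ≤ Real.exp (-(((m:ℝ)+1)) * Isum a θ) * 1 := by
            exact mul_le_mul_of_nonneg_left hsum_le (Real.exp_nonneg _)
        _ = Real.exp (-(((m:ℝ)+1)) * Isum a θ) := mul_one _
    · rw [if_neg hθΓ]
      refine le_of_eq (Finset.sum_eq_zero fun x hx => ?_)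
      have hxθ : empNC x = θ := (Finset.mem_filter.1 hx).2
      rw [if_neg (hxθ ▸ hθΓ)]
  have hstep1 : prEventNC π a m Γ
      ≤ ∑ θ ∈ T, (if θ ∈ Γ then Real.exp (-(((m:ℝ)+1)) * Isum a θ) else 0) := by
    rw [prEventNC, ← hfib]
    exact Finset.sum_le_sum hfiber_bound
  have hstep2 : ∀ θ ∈ T, (if θ ∈ Γ then Real.exp (-(((m:ℝ)+1)) * Isum a θ) else 0)
      ≤ Real.exp (-(((m:ℝ)+1)) * Isum a θ0) := by
    intro θ hθT
    by_cases hθΓ : θ ∈ Γ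
    · rw [if_pos hθΓ]
      apply Real.exp_le_exp.2
      have hle := hmin θ (Finset.mem_filter.2 ⟨hθT, hθΓ⟩)
      nlinarith [Nat.cast_nonneg (α := ℝ) m]
    · rw [if_neg hθΓ]
      exact Real.exp_nonneg _
  calc prEventNC π a m Γ
      ≤ ∑ θ ∈ T, (if θ ∈ Γ then Real.exp (-(((m:ℝ)+1)) * Isum a θ) else 0) := hstep1
    _ ≤ ∑ _θ ∈ T, Real.exp (-(((m:ℝ)+1)) * Isum a θ0) := Finset.sum_le_sum hstep2
    _ = (T.card : ℝ) * Real.exp (-(((m:ℝ)+1)) * Isum a θ0) := by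
        rw [Finset.sum_const, nsmul_eq_mul]
    _ ≤ ((m:ℝ)+2)^(n*n) * Real.exp (-(((m:ℝ)+1)) * Isum a θ0) := by
        exact mul_le_mul_of_nonneg_right (card_types_le m) (Real.exp_nonneg _)

/-- continuous closed form of the rate expression -/
noncomputable def Itilde (a θ : Fin n → Fin n → ℝ) : ℝ :=
  (∑ i, ∑ j, (θ i j * Real.log (θ i j) - θ i j * Real.log (a i j)))
    - ∑ i, marg θ i * Real.log (marg θ i)

lemma continuous_coord (i j : Fin n) :
    Continuous (fun θ : Fin n → Fin n → ℝ => θ i j) :=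
  (continuous_apply j).comp (continuous_apply i)

lemma continuous_marg (i : Fin n) :
    Continuous (fun θ : Fin n → Fin n → ℝ => marg θ i) := by
  unfold marg
  exact continuous_finset_sum _ fun j _ => continuous_coord i j

lemma continuous_Itilde (a : Fin n → Fin n → ℝ) : Continuous (fun θ => Itilde a θ) := by
  unfold Itilde
  apply Continuous.sub
  · refine continuous_finset_sum _ fun i _ => continuous_finset_sum _ fun j _ => ?_
    exact (Real.continuous_mul_log.comp (continuous_coord i j)).sub
      ((continuous_coord i j).mul continuous_const)
  · exact continuous_finset_sum _ fun i _ =>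
      Real.continuous_mul_log.comp (continuous_marg i)

lemma Isum_eq_Itilde {a θ : Fin n → Fin n → ℝ} (hapos : ∀ i j, 0 < a i j)
    (hθ : ∀ i j, 0 ≤ θ i j) : Isum a θ = Itilde a θ := by
  unfold Isum Itilde
  rw [← Finset.sum_sub_distrib]
  refine Finset.sum_congr rfl fun i _ => ?_
  by_cases hm : marg θ i = 0
  · have hz : ∀ j, θ i j = 0 := by
      intro j
      have := le_marg hθ i j
      have := hθ i j
      linarith [hm ▸ this]
    simp [hz, hm]
  · have hmpos : 0 < marg θ i := lt_of_le_of_ne (marg_nonneg hθ i) (Ne.symm hm)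
    have hkey : ∀ j, θ i j * Real.log (bker a θ i j / a i j)
        = (θ i j * Real.log (θ i j) - θ i j * Real.log (a i j))
          - θ i j * Real.log (marg θ i) := by
      intro j
      rcases eq_or_lt_of_le (hθ i j) with h0 | hpos
      · simp [← h0]
      · have hb : bker a θ i j = θ i j / marg θ i := by unfold bker; rw [if_neg hm]
        rw [hb, div_div]
        rw [Real.log_div (ne_of_gt hpos) (ne_of_gt (mul_pos hmpos (hapos i j)))]
        rw [Real.log_mul (ne_of_gt hmpos) (ne_of_gt (hapos i j))]
        ring
    rw [Finset.sum_congr rfl fun j _ => hkey j, Finset.sum_sub_distrib, ← Finset.sum_mul]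
    rfl

lemma rate16_eq {a θ : Fin n → Fin n → ℝ} (hθ : ∀ i j, 0 ≤ θ i j)
    (hstat : IsStat2 θ) : rate16 a θ = ((Isum a θ : ℝ) : EReal) := by
  rw [rate16, if_pos hstat]
  congr 1
  unfold Isum
  refine Finset.sum_congr rfl fun i _ => ?_
  by_cases hm : marg θ i = 0
  · have hz : ∀ j, θ i j = 0 := by
      intro j
      have h1 := le_marg hθ i j
      have h2 := hθ i j
      linarith [hm ▸ h1]
    simp [hz, hm]
  · rw [Finset.mul_sum]
    refine Finset.sum_congr rfl fun j _ => ?_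
    have hb : bker a θ i j = θ i j / marg θ i := by unfold bker; rw [if_neg hm]
    have hmm : marg θ i * (θ i j / marg θ i) = θ i j := by field_simp
    rw [hb, ← mul_assoc, hmm]

/-- Gibbs' inequality with equality case -/
lemma kl_ineq (p q : Fin n → ℝ) (hp : ∀ j, 0 ≤ p j) (hq : ∀ j, 0 ≤ q j)
    (hpq : ∀ j, q j = 0 → p j = 0) (hsum : ∑ j, p j = ∑ j, q j) :
    0 ≤ ∑ j, p j * Real.log (p j / q j) ∧
    ((∑ j, p j * Real.log (p j / q j)) = 0 → ∀ j, p j = q j) := by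
  have key : ∀ j, p j - q j ≤ p j * Real.log (p j / q j) := by
    intro j
    rcases eq_or_lt_of_le (hp j) with h0 | hpos
    · rw [← h0]; simp; linarith [hq j]
    · have hqpos : 0 < q j := by
        rcases eq_or_lt_of_le (hq j) with h0q | h
        · exfalso; rw [hpq j h0q.symm] at hpos; exact lt_irrefl 0 hpos
        · exact h
      have hlog : Real.log (q j / p j) ≤ q j / p j - 1 :=
        Real.log_le_sub_one_of_pos (div_pos hqpos hpos)
      have hlogdiv : Real.log (q j / p j) = - Real.log (p j / q j) := by
        rw [Real.log_div (ne_of_gt hqpos) (ne_of_gt hpos),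
          Real.log_div (ne_of_gt hpos) (ne_of_gt hqpos)]
        ring
      rw [hlogdiv] at hlog
      have h2 : 1 - q j / p j ≤ Real.log (p j / q j) := by linarith
      have h3 : p j * (1 - q j / p j) ≤ p j * Real.log (p j / q j) :=
        mul_le_mul_of_nonneg_left h2 (le_of_lt hpos)
      have h4 : p j * (1 - q j / p j) = p j - q j := by
        field_simp
      linarith
  constructor
  · have := Finset.sum_le_sum (fun j (_ : j ∈ univ) => key j)
    rw [Finset.sum_sub_distrib, hsum] at this
    linarith
  · intro hzero
    by_contra hne
    push_neg at hne
    obtain ⟨j0, hj0⟩ := hne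
    have hterm : ∀ j, 0 ≤ p j * Real.log (p j / q j) - (p j - q j) :=
      fun j => by linarith [key j]
    have hsum0 : ∑ j, (p j * Real.log (p j / q j) - (p j - q j)) = 0 := by
      rw [Finset.sum_sub_distrib, hzero, Finset.sum_sub_distrib, hsum]
      ring
    have hj0zero : p j0 * Real.log (p j0 / q j0) - (p j0 - q j0) = 0 :=
      (Finset.sum_eq_zero_iff_of_nonneg (fun j _ => hterm j)).1 hsum0 j0 (Finset.mem_univ j0)
    -- strictness at j0
    rcases eq_or_lt_of_le (hp j0) with h0 | hpos
    · have hq0 : 0 < q j0 := by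
        rcases eq_or_lt_of_le (hq j0) with h0q | h
        · exfalso; exact hj0 (by rw [← h0, ← h0q])
        · exact h
      rw [← h0] at hj0zero
      simp at hj0zero
      linarith
    · have hqpos : 0 < q j0 := by
        rcases eq_or_lt_of_le (hq j0) with h0q | h
        · exact absurd (hpq j0 h0q.symm) (ne_of_gt hpos)
        · exact h
      have hne1 : q j0 / p j0 ≠ 1 := by
        intro h
        exact hj0 ((div_eq_one_iff_eq (ne_of_gt hpos)).1 h).symm
      have hstrict : Real.log (q j0 / p j0) < q j0 / p j0 - 1 :=
        Real.log_lt_sub_one_of_pos (div_pos hqpos hpos) hne1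
      have hlogdiv : Real.log (q j0 / p j0) = - Real.log (p j0 / q j0) := by
        rw [Real.log_div (ne_of_gt hqpos) (ne_of_gt hpos),
          Real.log_div (ne_of_gt hpos) (ne_of_gt hqpos)]
        ring
      rw [hlogdiv] at hstrict
      have h2 : 1 - q j0 / p j0 < Real.log (p j0 / q j0) := by linarith
      have h3 : p j0 * (1 - q j0 / p j0) < p j0 * Real.log (p j0 / q j0) :=
        (mul_lt_mul_iff_right₀ hpos).2 h2
      have h4 : p j0 * (1 - q j0 / p j0) = p j0 - q j0 := by field_simp
      linarith

/-- rows of the rate expression are relative entropies: nonnegativity and equality case. -/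
lemma Isum_rows {b ξ : Fin n → Fin n → ℝ} (hbpos : ∀ i j, 0 < b i j)
    (hbrow : ∀ i, ∑ j, b i j = 1) (hξ : ∀ i j, 0 ≤ ξ i j) :
    0 ≤ Isum b ξ ∧ (Isum b ξ ≤ 0 → ∀ i j, ξ i j = marg ξ i * b i j) := by
  have hrow : ∀ i : Fin n,
      (∑ j, ξ i j * Real.log (bker b ξ i j / b i j))
        = ∑ j, ξ i j * Real.log (ξ i j / (marg ξ i * b i j)) := by
    intro i
    refine Finset.sum_congr rfl fun j _ => ?_
    rcases eq_or_lt_of_le (hξ i j) with h0 | hpos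
    · rw [← h0]; ring
    · have hm : marg ξ i ≠ 0 :=
        ne_of_gt (lt_of_lt_of_le hpos (le_marg hξ i j))
      have hb : bker b ξ i j = ξ i j / marg ξ i := by unfold bker; rw [if_neg hm]
      rw [hb, div_div]
  have hkl : ∀ i : Fin n,
      0 ≤ (∑ j, ξ i j * Real.log (ξ i j / (marg ξ i * b i j))) ∧
      ((∑ j, ξ i j * Real.log (ξ i j / (marg ξ i * b i j))) = 0 →
        ∀ j, ξ i j = marg ξ i * b i j) := by
    intro i
    refine kl_ineq (fun j => ξ i j) (fun j => marg ξ i * b i j) (fun j => hξ i j)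
      (fun j => mul_nonneg (marg_nonneg hξ i) (hbpos i j).le) ?_ ?_
    · intro j hj
      rcases mul_eq_zero.1 hj with hm | hbz
      · have := le_marg hξ i j
        have := hξ i j
        linarith [hm ▸ this]
      · exact absurd hbz (ne_of_gt (hbpos i j))
    · rw [← Finset.mul_sum, hbrow i, mul_one]
      rfl
  have hIsum : Isum b ξ = ∑ i, ∑ j, ξ i j * Real.log (ξ i j / (marg ξ i * b i j)) := by
    unfold Isum
    exact Finset.sum_congr rfl fun i _ => hrow i
  constructor
  · rw [hIsum]
    exact Finset.sum_nonneg fun i _ => (hkl i).1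
  · intro hle i j
    rw [hIsum] at hle
    have hzero : ∀ i ∈ univ,
        (∑ j, ξ i j * Real.log (ξ i j / (marg ξ i * b i j))) = 0 := by
      refine (Finset.sum_eq_zero_iff_of_nonneg (fun i _ => (hkl i).1)).1 ?_
      have h0 := Finset.sum_nonneg (fun i (_ : i ∈ univ) => (hkl i).1)
      linarith
    exact (hkl i).2 (hzero i (Finset.mem_univ i)) j

/-- Doeblin: a strictly positive stochastic matrix has at most one invariant
probability vector. -/
lemma inv_unique {b : Fin n → Fin n → ℝ} (hbpos : ∀ i j, 0 < b i j)
    (hbrow : ∀ i, ∑ j, b i j = 1)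
    {μ ν : Fin n → ℝ} (hμ1 : ∑ i, μ i = 1) (hν1 : ∑ i, ν i = 1)
    (hμ : ∀ j, ∑ i, μ i * b i j = μ j) (hν : ∀ j, ∑ i, ν i * b i j = ν j) :
    μ = ν := by
  rcases Nat.eq_zero_or_pos n with hn | hn
  · subst hn
    funext i
    exact i.elim0
  have hnon : Nonempty (Fin n) := ⟨⟨0, hn⟩⟩
  obtain ⟨p0, _, hp0⟩ := Finset.exists_min_image (univ : Finset (Fin n × Fin n))
    (fun p => b p.1 p.2) Finset.univ_nonempty
  set ε := b p0.1 p0.2 with hε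
  have hεpos : 0 < ε := hbpos _ _
  have hεle : ∀ i j, ε ≤ b i j := fun i j => hp0 (i, j) (Finset.mem_univ _)
  set d : Fin n → ℝ := fun i => μ i - ν i with hd
  have hdsum : ∑ i, d i = 0 := by
    rw [hd]; rw [Finset.sum_sub_distrib, hμ1, hν1]; ring
  have hdinv : ∀ j, ∑ i, d i * b i j = d j := by
    intro j
    rw [hd]
    simp only [sub_mul]
    rw [Finset.sum_sub_distrib, hμ j, hν j]
  have hkey : ∑ j, |d j| ≤ (1 - (n:ℝ)*ε) * ∑ i, |d i| := by
    have h1 : ∀ j, d j = ∑ i, d i * (b i j - ε) := by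
      intro j
      have : ∑ i, d i * (b i j - ε) = (∑ i, d i * b i j) - (∑ i, d i) * ε := by
        rw [Finset.sum_mul, ← Finset.sum_sub_distrib]
        exact Finset.sum_congr rfl fun i _ => by ring
      rw [this, hdinv j, hdsum]
      ring
    have h2 : ∀ j, |d j| ≤ ∑ i, |d i| * (b i j - ε) := by
      intro j
      rw [h1 j]
      refine (Finset.abs_sum_le_sum_abs _ _).trans ?_
      refine Finset.sum_le_sum fun i _ => ?_
      rw [abs_mul, abs_of_nonneg (show (0:ℝ) ≤ b i j - ε by linarith [hεle i j])]
    calc ∑ j, |d j| ≤ ∑ j, ∑ i, |d i| * (b i j - ε) :=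
          Finset.sum_le_sum fun j _ => h2 j
      _ = ∑ i, |d i| * ∑ j, (b i j - ε) := by
          rw [Finset.sum_comm]
          exact Finset.sum_congr rfl fun i _ => (Finset.mul_sum _ _ _).symm
      _ = (1 - (n:ℝ)*ε) * ∑ i, |d i| := by
          have hconst : ∀ i : Fin n, ∑ j, (b i j - ε) = 1 - (n:ℝ)*ε := by
            intro i
            rw [Finset.sum_sub_distrib, hbrow i, Finset.sum_const, Finset.card_univ]
            simp [nsmul_eq_mul]
          calc ∑ i, |d i| * ∑ j, (b i j - ε) = ∑ i, |d i| * (1 - (n:ℝ)*ε) :=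
                Finset.sum_congr rfl fun i _ => by rw [hconst i]
            _ = (1 - (n:ℝ)*ε) * ∑ i, |d i| := by rw [← Finset.sum_mul]; ring
  have habs : 0 ≤ ∑ i, |d i| := Finset.sum_nonneg fun i _ => abs_nonneg _
  have hzero : ∑ i, |d i| = 0 := by
    by_contra h
    have hpos : 0 < ∑ i, |d i| := lt_of_le_of_ne habs (Ne.symm h)
    have hnε : 0 < (n:ℝ)*ε := by
      have : (0:ℝ) < n := by exact_mod_cast hn
      positivity
    nlinarith
  funext i
  have : |d i| = 0 := by
    have := (Finset.sum_eq_zero_iff_of_nonneg (fun i (_ : i ∈ univ) => abs_nonneg (d i))).1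
      hzero i (Finset.mem_univ i)
    exact this
  have h5 : μ i - ν i = 0 := by simpa [hd] using abs_eq_zero.1 this
  linarith

lemma isClosed_simplex2 : IsClosed (simplex2 n) := by
  have h1 : simplex2 n = (⋂ i, ⋂ j, {θ : Fin n → Fin n → ℝ | 0 ≤ θ i j})
      ∩ {θ : Fin n → Fin n → ℝ | ∑ i, ∑ j, θ i j = 1} := by
    ext θ
    simp [simplex2, Set.mem_iInter]
  rw [h1]
  refine IsClosed.inter ?_ ?_
  · exact isClosed_iInter fun i => isClosed_iInter fun j =>
      isClosed_le continuous_const (continuous_coord i j)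
  · exact isClosed_eq (continuous_finset_sum _ fun i _ =>
      continuous_finset_sum _ fun j _ => continuous_coord i j) continuous_const

lemma isCompact_simplex2 : IsCompact (simplex2 n) := by
  rw [Metric.isCompact_iff_isClosed_bounded]
  refine ⟨isClosed_simplex2, ?_⟩
  refine (Metric.isBounded_closedBall (x := (0 : Fin n → Fin n → ℝ)) (r := 1)).subset ?_
  intro θ hθ
  rw [Metric.mem_closedBall, dist_pi_le_iff zero_le_one]
  intro i
  rw [dist_pi_le_iff zero_le_one]
  intro j
  rw [Real.dist_eq]
  have h0 := hθ.1 i j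
  have h1 : θ i j ≤ 1 := by
    have h2 : θ i j ≤ ∑ j, θ i j := le_marg hθ.1 i j
    have h3 : ∑ j, θ i j ≤ ∑ i, ∑ j, θ i j :=
      Finset.single_le_sum (fun i _ => Finset.sum_nonneg fun j _ => hθ.1 i j)
        (Finset.mem_univ i)
    rw [hθ.2] at h3
    linarith
  simp only [Pi.zero_apply, sub_zero]
  rw [abs_of_nonneg h0]
  exact h1

lemma isCompact_of_closed_subset {K : Set (Fin n → Fin n → ℝ)} (hcl : IsClosed K)
    (hsub : K ⊆ simplex2 n) : IsCompact K :=
  IsCompact.of_isClosed_subset isCompact_simplex2 hcl hsub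

lemma dist2v_triangle (x y z : Fin n → Fin n → ℝ) :
    dist2v x z ≤ dist2v x y + dist2v y z := by
  unfold dist2v
  rw [← Finset.sum_add_distrib]
  refine Finset.sum_le_sum fun i _ => ?_
  rw [← Finset.sum_add_distrib]
  refine Finset.sum_le_sum fun j _ => ?_
  exact (abs_sub_le _ _ _)

lemma dist2v_self (x : Fin n → Fin n → ℝ) : dist2v x x = 0 := by
  simp [dist2v]

lemma continuous_dist2v (ζ : Fin n → Fin n → ℝ) :
    Continuous (fun ξ => dist2v ξ ζ) := by
  unfold dist2v
  exact continuous_finset_sum _ fun i _ => continuous_finset_sum _ fun j _ =>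
    ((continuous_coord i j).sub continuous_const).abs

lemma abs_le_dist2v (x y : Fin n → Fin n → ℝ) (i j : Fin n) :
    |x i j - y i j| ≤ dist2v x y := by
  unfold dist2v
  calc |x i j - y i j| ≤ ∑ j', |x i j' - y i j'| :=
        Finset.single_le_sum (f := fun j' => |x i j' - y i j'|)
          (fun j' _ => abs_nonneg _) (Finset.mem_univ j)
    _ ≤ ∑ i', ∑ j', |x i' j' - y i' j'| :=
        Finset.single_le_sum (f := fun i' => ∑ j', |x i' j' - y i' j'|)
          (fun i' _ => Finset.sum_nonneg fun j' _ => abs_nonneg _)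
          (Finset.mem_univ i)

lemma isClosed_stat : IsClosed {ξ : Fin n → Fin n → ℝ | IsStat2 ξ} := by
  have h1 : {ξ : Fin n → Fin n → ℝ | IsStat2 ξ}
      = ⋂ i, {ξ : Fin n → Fin n → ℝ | ∑ j, ξ i j = ∑ j, ξ j i} := by
    ext ξ; simp [IsStat2, Set.mem_iInter]
  rw [h1]
  exact isClosed_iInter fun i => isClosed_eq
    (continuous_finset_sum _ fun j _ => continuous_coord i j)
    (continuous_finset_sum _ fun j _ => continuous_coord j i)

lemma F_eq_bot {p : ℝ} (hp : p ≤ 0) (c : ℝ) (hc : 0 < c) :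
    ((c : ℝ) : EReal) * elog p = ⊥ := by
  rw [elog, if_pos hp]
  exact EReal.coe_mul_bot_of_pos hc

lemma F_eq_coe {p : ℝ} (c : ℝ) (hp : 0 < p) :
    ((c : ℝ) : EReal) * elog p = ((c * Real.log p : ℝ) : EReal) := by
  rw [elog, if_neg (not_le.2 hp), EReal.coe_mul]

lemma tendsto_m2 : Tendsto (fun m : ℕ => (m:ℝ)+2) atTop atTop :=
  tendsto_atTop_add_const_right atTop 2 tendsto_natCast_atTop_atTop

lemma tendsto_m1 : Tendsto (fun m : ℕ => (m:ℝ)+1) atTop atTop :=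
  tendsto_atTop_add_const_right atTop 1 tendsto_natCast_atTop_atTop

lemma tendsto_inv_m2 : Tendsto (fun m : ℕ => ((m:ℝ)+2)⁻¹) atTop (nhds 0) :=
  tendsto_inv_atTop_zero.comp tendsto_m2

lemma tendsto_inv_m1 : Tendsto (fun m : ℕ => ((m:ℝ)+1)⁻¹) atTop (nhds 0) :=
  tendsto_inv_atTop_zero.comp tendsto_m1

lemma tendsto_ratio21 : Tendsto (fun m : ℕ => ((m:ℝ)+2)/((m:ℝ)+1)) atTop (nhds 1) := by
  have h : ∀ m : ℕ, ((m:ℝ)+2)/((m:ℝ)+1) = 1 + ((m:ℝ)+1)⁻¹ := by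
    intro m
    have hm : ((m:ℝ)+1) ≠ 0 := by positivity
    field_simp
    ring
  rw [funext h]
  have := (tendsto_const_nhds (x := (1:ℝ)) (f := atTop (α := ℕ))).add tendsto_inv_m1
  simpa using this

lemma tendsto_ratio12 : Tendsto (fun m : ℕ => ((m:ℝ)+1)/((m:ℝ)+2)) atTop (nhds 1) := by
  have h : ∀ m : ℕ, ((m:ℝ)+1)/((m:ℝ)+2) = 1 - ((m:ℝ)+2)⁻¹ := by
    intro m
    have hm : ((m:ℝ)+2) ≠ 0 := by positivity
    field_simp
    ring
  rw [funext h]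
  have := (tendsto_const_nhds (x := (1:ℝ)) (f := atTop (α := ℕ))).sub tendsto_inv_m2
  simpa using this

lemma tendsto_log_m2_div_m1 :
    Tendsto (fun m : ℕ => Real.log ((m:ℝ)+2) / ((m:ℝ)+1)) atTop (nhds 0) := by
  have h1 : Tendsto (fun x : ℝ => Real.log x / x) atTop (nhds 0) := by
    have := Real.isLittleO_log_id_atTop.tendsto_div_nhds_zero
    simpa using this
  have h2 := (h1.comp tendsto_m2).mul tendsto_ratio21
  have h3 : ∀ m : ℕ, ((fun x : ℝ => Real.log x / x) ∘ (fun m : ℕ => (m:ℝ)+2)) m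
      * (((m:ℝ)+2)/((m:ℝ)+1)) = Real.log ((m:ℝ)+2) / ((m:ℝ)+1) := by
    intro m
    have hm1 : ((m:ℝ)+1) ≠ 0 := by positivity
    have hm2 : ((m:ℝ)+2) ≠ 0 := by positivity
    simp only [Function.comp]
    field_simp
  rw [← funext h3]
  simpa using h2

/-- the upper bound half of the LDP -/
theorem upperUB (π : Fin n → ℝ) (a : Fin n → Fin n → ℝ)
    (hπ : (∀ i, 0 ≤ π i) ∧ ∑ i, π i = 1)
    (hapos : ∀ i j, 0 < a i j) (harow : ∀ i, ∑ j, a i j = 1)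
    (Γ : Set (Fin n → Fin n → ℝ)) (hΓ : Γ ⊆ simplex2 n)
    (hcl : ClosedIn2 (simplex2 n) Γ) :
    Filter.limsup
        (fun m : ℕ => ((((m:ℝ)+2)⁻¹ : ℝ) : EReal) * elog (prEventNC π a m Γ))
        Filter.atTop
      ≤ -(⨅ θ ∈ Γ, rate16 a θ) := by
  classical
  set F := fun m : ℕ => ((((m:ℝ)+2)⁻¹ : ℝ) : EReal) * elog (prEventNC π a m Γ) with hF
  -- main claim: a frequent lower bound c forces a point of Γ with rate ≤ -c
  have main : ∀ c : ℝ, (∃ᶠ m in atTop, (c : EReal) < F m) → (c : EReal) ≤ -(⨅ θ ∈ Γ, rate16 a θ) := by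
    intro c hc
    obtain ⟨φ, hφ, hcφ⟩ := Filter.extraction_of_frequently_atTop hc
    have hstep : ∀ k : ℕ, ∃ θ : Fin n → Fin n → ℝ,
        (∃ x : Fin (φ k + 2) → Fin n, empNC x = θ) ∧ θ ∈ Γ ∧
        Isum a θ ≤ (((n:ℝ)*(n:ℝ)) * Real.log ((φ k : ℝ)+2) - c * ((φ k : ℝ)+2))
          / ((φ k : ℝ)+1) := by
      intro k
      have hck := hcφ k
      have hm2pos : (0:ℝ) < ((φ k : ℝ)+2) := by positivity
      have hm1pos : (0:ℝ) < ((φ k : ℝ)+1) := by positivity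
      have hPr : 0 < prEventNC π a (φ k) Γ := by
        by_contra h
        push_neg at h
        rw [hF] at hck
        simp only at hck
        rw [F_eq_bot h _ (by positivity : (0:ℝ) < ((φ k : ℝ)+2)⁻¹)] at hck
        exact (not_lt_bot hck)
      have hex : ∃ x : Fin (φ k + 2) → Fin n, empNC x ∈ Γ := by
        by_contra h
        push_neg at h
        have : prEventNC π a (φ k) Γ = 0 := by
          rw [prEventNC]
          exact Finset.sum_eq_zero fun x _ => if_neg (h x)
        rw [this] at hPr
        exact lt_irrefl 0 hPr
      obtain ⟨θ, hach, hθΓ, hbound⟩ :=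
        prEvent_exists_bound π hπ.1 hπ.2 a hapos harow (φ k) Γ hex
      refine ⟨θ, hach, hθΓ, ?_⟩
      -- extract the numeric inequality
      have hFval : F (φ k) = ((((φ k : ℝ)+2)⁻¹ * Real.log (prEventNC π a (φ k) Γ) : ℝ) : EReal) := by
        rw [hF]
        exact F_eq_coe _ hPr
      rw [hFval, EReal.coe_lt_coe_iff] at hck
      have hck2 : c * ((φ k : ℝ)+2) < Real.log (prEventNC π a (φ k) Γ) := by
        rw [inv_mul_eq_div, lt_div_iff₀ hm2pos] at hck
        linarith
      have hlogB : Real.log (prEventNC π a (φ k) Γ)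
          ≤ ((n:ℝ)*(n:ℝ)) * Real.log ((φ k : ℝ)+2) - ((φ k : ℝ)+1) * Isum a θ := by
        have h1 := Real.log_le_log hPr hbound
        rw [Real.log_mul (by positivity) (ne_of_gt (Real.exp_pos _)), Real.log_exp,
          Real.log_pow] at h1
        calc Real.log (prEventNC π a (φ k) Γ)
            ≤ ((n*n : ℕ) : ℝ) * Real.log ((φ k : ℝ)+2) + (-(((φ k : ℝ)+1)) * Isum a θ) := h1
          _ = ((n:ℝ)*(n:ℝ)) * Real.log ((φ k : ℝ)+2) - ((φ k : ℝ)+1) * Isum a θ := by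
              push_cast
              ring
      rw [le_div_iff₀ hm1pos]
      nlinarith
    choose θs hach hΓs hIb using hstep
    have hsimp : ∀ k, θs k ∈ simplex2 n := by
      intro k
      obtain ⟨x, hx⟩ := hach k
      rw [← hx]
      exact empNC_mem_simplex x
    obtain ⟨θstar, hθstar_mem, ψ, hψ, hconv⟩ := isCompact_simplex2.tendsto_subseq hsimp
    have hθ0 : ∀ i j, 0 ≤ θstar i j := hθstar_mem.1
    -- θstar ∈ Γ
    have hθstarΓ : θstar ∈ Γ := by
      by_contra hnot
      obtain ⟨ε, hε, hball⟩ := hcl θstar ⟨hθstar_mem, hnot⟩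
      have hd : Tendsto (fun k => dist2v (θs (ψ k)) θstar) atTop (nhds 0) := by
        have := ((continuous_dist2v θstar).tendsto θstar).comp hconv
        simpa [dist2v_self, Function.comp_def] using this
      have hev : ∀ᶠ k in atTop, dist2v (θs (ψ k)) θstar < ε :=
        hd.eventually (gt_mem_nhds hε)
      obtain ⟨k, hk⟩ := hev.exists
      exact (hball (θs (ψ k)) (hsimp (ψ k)) hk).2 (hΓs (ψ k))
    -- θstar stationary
    have hθstat : IsStat2 θstar := by
      intro i
      set gap : (Fin n → Fin n → ℝ) → ℝ := fun ξ => (∑ j, ξ i j) - (∑ j, ξ j i) with hgap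
      have hgapcont : Continuous gap := by
        rw [hgap]
        exact (continuous_finset_sum _ fun j _ => continuous_coord i j).sub
          (continuous_finset_sum _ fun j _ => continuous_coord j i)
      have h1 : Tendsto (fun k => |gap (θs (ψ k))|) atTop (nhds |gap θstar|) :=
        ((hgapcont.abs.tendsto θstar).comp hconv)
      have h2 : ∀ k, |gap (θs (ψ k))| ≤ 2/((k:ℝ)+1) := by
        intro k
        obtain ⟨x, hx⟩ := hach (ψ k)
        have hg : |gap (θs (ψ k))| ≤ 2/((φ (ψ k) : ℝ)+1) := by
          rw [hgap, ← hx]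
          exact empNC_gap x i
        refine hg.trans ?_
        have hk : (k:ℝ) ≤ (φ (ψ k) : ℝ) := by
          exact_mod_cast le_trans (hψ.le_apply) (hφ.le_apply)
        apply div_le_div_of_nonneg_left (by norm_num) (by positivity)
        linarith
      have h3 : Tendsto (fun k : ℕ => 2/((k:ℝ)+1)) atTop (nhds 0) := by
        have := tendsto_inv_m1.const_mul (2:ℝ)
        simpa [div_eq_mul_inv] using this
      have h4 : |gap θstar| ≤ 0 := le_of_tendsto_of_tendsto' h1 h3 h2
      have h5 : gap θstar = 0 := abs_eq_zero.1 (le_antisymm h4 (abs_nonneg _))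
      rw [hgap] at h5
      simp only at h5
      linarith
    -- rate at θstar is ≤ -c
    have hIstar : Isum a θstar ≤ -c := by
      have h1 : Tendsto (fun k => Itilde a (θs (ψ k))) atTop (nhds (Itilde a θstar)) :=
        ((continuous_Itilde a).tendsto θstar).comp hconv
      have h2 : ∀ k, Itilde a (θs (ψ k))
          ≤ (((n:ℝ)*(n:ℝ)) * Real.log ((φ (ψ k) : ℝ)+2) - c * ((φ (ψ k) : ℝ)+2))
            / ((φ (ψ k) : ℝ)+1) := by
        intro k
        rw [← Isum_eq_Itilde hapos (fun i j => (hsimp (ψ k)).1 i j)]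
        exact hIb (ψ k)
      have h3 : Tendsto (fun k =>
          (((n:ℝ)*(n:ℝ)) * Real.log ((φ (ψ k) : ℝ)+2) - c * ((φ (ψ k) : ℝ)+2))
            / ((φ (ψ k) : ℝ)+1)) atTop (nhds (-c)) := by
        have hv : Tendsto (fun m : ℕ =>
            (((n:ℝ)*(n:ℝ)) * Real.log ((m:ℝ)+2) - c * ((m:ℝ)+2)) / ((m:ℝ)+1))
            atTop (nhds (-c)) := by
          have heq : ∀ m : ℕ,
              (((n:ℝ)*(n:ℝ)) * Real.log ((m:ℝ)+2) - c * ((m:ℝ)+2)) / ((m:ℝ)+1)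
              = ((n:ℝ)*(n:ℝ)) * (Real.log ((m:ℝ)+2)/((m:ℝ)+1))
                - c * (((m:ℝ)+2)/((m:ℝ)+1)) := by
            intro m
            have hm : ((m:ℝ)+1) ≠ 0 := by positivity
            field_simp
          rw [funext heq]
          have := ((tendsto_log_m2_div_m1.const_mul ((n:ℝ)*(n:ℝ))).sub
            (tendsto_ratio21.const_mul c))
          simpa using this
        exact hv.comp ((hφ.comp hψ).tendsto_atTop)
      have h4 : Itilde a θstar ≤ -c := le_of_tendsto_of_tendsto' h1 h3 h2
      rw [Isum_eq_Itilde hapos hθ0]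
      exact h4
    have hrate : rate16 a θstar ≤ ((-c : ℝ) : EReal) := by
      rw [rate16_eq hθ0 hθstat, EReal.coe_le_coe_iff]
      exact hIstar
    have hinf : (⨅ θ ∈ Γ, rate16 a θ) ≤ ((-c : ℝ) : EReal) :=
      le_trans (iInf₂_le θstar hθstarΓ) hrate
    calc (c : EReal) = -((-c : ℝ) : EReal) := by rw [EReal.coe_neg]; rw [neg_neg]
      _ ≤ -(⨅ θ ∈ Γ, rate16 a θ) := EReal.neg_le_neg_iff.2 hinf
  -- conclude
  by_contra hcon
  push_neg at hcon
  obtain ⟨c, hc1, hc2⟩ := EReal.exists_between_coe_real hcon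
  have hfreq : ∃ᶠ m in atTop, (c : EReal) < F m := by
    by_contra h
    rw [Filter.not_frequently] at h
    have hev : ∀ᶠ m in atTop, F m ≤ (c : EReal) := h.mono fun m hm => not_lt.1 hm
    have : Filter.limsup F atTop ≤ (c : EReal) := Filter.limsup_le_of_le (by isBoundedDefault) hev
    exact absurd (lt_of_lt_of_le hc2 this) (lt_irrefl _)
  exact absurd (main c hfreq) (not_le.2 hc1)

/-- quantitative lower bound around a strictly positive stationary point of `Γ` -/
theorem lower_aux (π : Fin n → ℝ) (a : Fin n → Fin n → ℝ)
    (hπ : (∀ i, 0 ≤ π i) ∧ ∑ i, π i = 1) (hπpos : ∀ i, 0 < π i)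
    (hapos : ∀ i j, 0 < a i j) (harow : ∀ i, ∑ j, a i j = 1)
    (Γ : Set (Fin n → Fin n → ℝ)) (hop : OpenIn2 (simplex2 n) Γ)
    (θf : Fin n → Fin n → ℝ) (hθfΓ : θf ∈ Γ) (hθfpos : ∀ i j, 0 < θf i j)
    (hθfstat : IsStat2 θf) (hθfsum : ∑ i, ∑ j, θf i j = 1)
    (η : ℝ) (hη : 0 < η) :
    ((-(Isum a θf) - η : ℝ) : EReal) ≤
      Filter.liminf
        (fun m : ℕ => ((((m:ℝ)+2)⁻¹ : ℝ) : EReal) * elog (prEventNC π a m Γ))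
        Filter.atTop := by
  classical
  set F := fun m : ℕ => ((((m:ℝ)+2)⁻¹ : ℝ) : EReal) * elog (prEventNC π a m Γ) with hF
  have hn0 : n ≠ 0 := by
    rintro rfl
    simp at hθfsum
  have hnon : Nonempty (Fin n) := ⟨⟨0, Nat.pos_of_ne_zero hn0⟩⟩
  set μf : Fin n → ℝ := marg θf with hμf
  have hμfpos : ∀ i, 0 < μf i :=
    fun i => Finset.sum_pos (fun j _ => hθfpos i j) Finset.univ_nonempty
  have hμf1 : ∑ i, μf i = 1 := by
    rw [hμf]; unfold marg; exact hθfsum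
  set bf : Fin n → Fin n → ℝ := bker a θf with hbf
  have hbfeq : ∀ i j, bf i j = θf i j / μf i := by
    intro i j
    rw [hbf]; unfold bker; rw [if_neg (ne_of_gt (hμfpos i))]
  have hbfpos : ∀ i j, 0 < bf i j := fun i j => by
    rw [hbfeq]; exact div_pos (hθfpos i j) (hμfpos i)
  have hbfrow : ∀ i, ∑ j, bf i j = 1 := fun i => bker_row harow i
  have hfmul : ∀ i j, μf i * bf i j = θf i j := by
    intro i j
    rw [hbfeq, mul_comm]
    exact div_mul_cancel₀ _ (ne_of_gt (hμfpos i))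
  have hμfinv : ∀ j, ∑ i, μf i * bf i j = μf j := by
    intro j
    rw [Finset.sum_congr rfl fun i _ => hfmul i j]
    have := hθfstat j
    rw [hμf]
    unfold marg
    exact this.symm
  obtain ⟨ε1, hε1, hball1⟩ := hop θf hθfΓ
  set C : ℝ := ∑ i, ∑ j, |Real.log (bf i j / a i j)| with hC
  have hC0 : 0 ≤ C :=
    Finset.sum_nonneg fun i _ => Finset.sum_nonneg fun j _ => abs_nonneg _
  set δ : ℝ := min ε1 (η/(2*(C+1))) with hδ
  have hδpos : 0 < δ := lt_min hε1 (by positivity)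
  have hδε1 : δ ≤ ε1 := min_le_left _ _
  have hCδ : C * δ ≤ η/2 := by
    have h1 : δ ≤ η/(2*(C+1)) := min_le_right _ _
    have h2 : C * δ ≤ C * (η/(2*(C+1))) := mul_le_mul_of_nonneg_left h1 hC0
    have h3 : C * (η/(2*(C+1))) ≤ η/2 := by
      have hCp : (0:ℝ) < 2*(C+1) := by positivity
      rw [show C * (η/(2*(C+1))) = (C*η)/(2*(C+1)) by ring,
        div_le_div_iff₀ hCp two_pos]
      nlinarith
    linarith
  set Ball : Set (Fin n → Fin n → ℝ) := {ξ | ξ ∈ simplex2 n ∧ dist2v ξ θf < δ} with hBall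
  set Γc : Set (Fin n → Fin n → ℝ) := simplex2 n \ Ball with hΓc
  have hBallΓ : Ball ⊆ Γ := fun ξ hξ => hball1 ξ hξ.1 (lt_of_lt_of_le hξ.2 hδε1)
  have hΓcsub : Γc ⊆ simplex2 n := Set.diff_subset
  have hΓccl : ClosedIn2 (simplex2 n) Γc := by
    intro ζ hζ
    have hζBall : ζ ∈ Ball := by
      by_contra h3
      exact hζ.2 ⟨hζ.1, h3⟩
    refine ⟨δ - dist2v ζ θf, by
      have := hζBall.2
      linarith, ?_⟩
    intro ξ hξs hd
    refine ⟨hξs, fun hc => hc.2 ⟨hξs, ?_⟩⟩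
    calc dist2v ξ θf ≤ dist2v ξ ζ + dist2v ζ θf := dist2v_triangle _ _ _
      _ < δ := by linarith
  -- spectral gap constant via compactness
  obtain ⟨γ, hγpos, hγle⟩ : ∃ γ : ℝ, 0 < γ ∧ ∀ ξ ∈ Γc, ((γ : ℝ) : EReal) ≤ rate16 bf ξ := by
    set K : Set (Fin n → Fin n → ℝ) :=
      simplex2 n ∩ ({ξ | IsStat2 ξ} ∩ {ξ | δ ≤ dist2v ξ θf}) with hK
    have hKstat_of : ∀ ξ ∈ Γc, IsStat2 ξ → ξ ∈ K := by
      intro ξ hξ hs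
      refine ⟨hξ.1, hs, ?_⟩
      by_contra h
      simp only [Set.mem_setOf_eq, not_le] at h
      exact hξ.2 ⟨hξ.1, h⟩
    rcases K.eq_empty_or_nonempty with hKe | hKne
    · refine ⟨1, one_pos, fun ξ hξ => ?_⟩
      by_cases hs : IsStat2 ξ
      · exact absurd (hKstat_of ξ hξ hs) (by rw [hKe]; exact Set.notMem_empty ξ)
      · rw [rate16, if_neg hs]; exact le_top
    · have hKcl : IsClosed K :=
        isClosed_simplex2.inter (isClosed_stat.inter
          (isClosed_le continuous_const (continuous_dist2v θf)))
      have hKcp : IsCompact K := isCompact_of_closed_subset hKcl Set.inter_subset_left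
      obtain ⟨ξm, hξmK, hmin⟩ :=
        hKcp.exists_isMinOn hKne (continuous_Itilde bf).continuousOn
      have hξm0 : ∀ i j, 0 ≤ ξm i j := hξmK.1.1
      have hγgt : 0 < Itilde bf ξm := by
        have hge : 0 ≤ Isum bf ξm := (Isum_rows hbfpos hbfrow hξm0).1
        rcases eq_or_lt_of_le hge with heq | hlt
        · exfalso
          have hrec := (Isum_rows hbfpos hbfrow hξm0).2 (le_of_eq heq.symm)
          have hstat := hξmK.2.1
          have hinv2 : ∀ j, ∑ i, marg ξm i * bf i j = marg ξm j := by
            intro j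
            rw [Finset.sum_congr rfl fun i _ => (hrec i j).symm]
            have := hstat j
            unfold marg
            exact this.symm
          have hsum : ∑ i, marg ξm i = 1 := by
            have := hξmK.1.2
            unfold marg
            exact this
          have hmeq : marg ξm = μf := inv_unique hbfpos hbfrow hsum hμf1 hinv2 hμfinv
          have hξmθf : ξm = θf := by
            funext i j
            rw [hrec i j, congrFun hmeq i]
            exact hfmul i j
          have hdist : δ ≤ dist2v ξm θf := hξmK.2.2
          rw [hξmθf, dist2v_self] at hdist
          linarith
        · rw [← Isum_eq_Itilde hbfpos hξm0]
          exact hlt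
      refine ⟨Itilde bf ξm, hγgt, ?_⟩
      intro ξ hξ
      by_cases hs : IsStat2 ξ
      · have hξK := hKstat_of ξ hξ hs
        rw [rate16_eq hξ.1.1 hs, EReal.coe_le_coe_iff,
          Isum_eq_Itilde hbfpos hξ.1.1]
        exact hmin hξK
      · rw [rate16, if_neg hs]; exact le_top
  -- the auxiliary chain rarely leaves the ball
  have hUB := upperUB μf bf ⟨fun i => (hμfpos i).le, hμf1⟩ hbfpos hbfrow Γc hΓcsub hΓccl
  have hinfγ : ((γ : ℝ) : EReal) ≤ ⨅ ξ ∈ Γc, rate16 bf ξ := le_iInf₂ hγle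
  have hUB2 : Filter.limsup
      (fun m : ℕ => ((((m:ℝ)+2)⁻¹ : ℝ) : EReal) * elog (prEventNC μf bf m Γc))
      Filter.atTop ≤ ((-γ : ℝ) : EReal) := by
    refine hUB.trans ?_
    rw [EReal.coe_neg]
    exact EReal.neg_le_neg_iff.2 hinfγ
  have hUB3 : Filter.limsup
      (fun m : ℕ => ((((m:ℝ)+2)⁻¹ : ℝ) : EReal) * elog (prEventNC μf bf m Γc))
      Filter.atTop < ((-γ/2 : ℝ) : EReal) :=
    lt_of_le_of_lt hUB2 (EReal.coe_lt_coe_iff.2 (by linarith))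
  have hev1 := eventually_lt_of_limsup_lt hUB3
  have hev2 : ∀ᶠ m : ℕ in atTop, Real.log 2 ≤ (γ/2) * ((m:ℝ)+2) := by
    have ht : Tendsto (fun m : ℕ => (γ/2) * ((m:ℝ)+2)) atTop atTop :=
      tendsto_m2.const_mul_atTop (by positivity)
    exact ht.eventually_ge_atTop _
  have hsmall : ∀ᶠ m : ℕ in atTop, prEventNC μf bf m Γc ≤ 1/2 := by
    filter_upwards [hev1, hev2] with m h1 h2
    by_contra h3
    push_neg at h3
    have hPrpos : 0 < prEventNC μf bf m Γc := lt_trans one_half_pos h3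
    rw [F_eq_coe _ hPrpos, EReal.coe_lt_coe_iff] at h1
    have hm2 : (0:ℝ) < (m:ℝ)+2 := by positivity
    rw [inv_mul_eq_div, div_lt_iff₀ hm2] at h1
    have hlog : Real.log (1/2) ≤ Real.log (prEventNC μf bf m Γc) :=
      Real.log_le_log one_half_pos h3.le
    rw [show (1/2 : ℝ) = 2⁻¹ by norm_num, Real.log_inv] at hlog
    nlinarith
  -- total probability splits between the ball and its complement
  have hsplitBG : ∀ m : ℕ, prEventNC μf bf m Ball + prEventNC μf bf m Γc = 1 := by
    intro m
    rw [prEventNC, prEventNC, ← Finset.sum_add_distrib]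
    refine Eq.trans (Finset.sum_congr rfl fun x _ => ?_)
      (sum_pathPA bf hbfrow (m+1) μf hμf1)
    by_cases hB : empNC x ∈ Ball
    · rw [if_pos hB, if_neg (fun hc : empNC x ∈ Γc => hc.2 hB), add_zero]
    · rw [if_neg hB, if_pos (show empNC x ∈ Γc from ⟨empNC_mem_simplex x, hB⟩), zero_add]
  have hbig : ∀ᶠ m : ℕ in atTop, (1/2 : ℝ) ≤ prEventNC μf bf m Ball := by
    filter_upwards [hsmall] with m hm
    have := hsplitBG m
    linarith
  -- initial-distribution comparison constant
  obtain ⟨i0, _, hi0⟩ := Finset.exists_min_image (univ : Finset (Fin n))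
    (fun i => π i / μf i) Finset.univ_nonempty
  set c0 : ℝ := π i0 / μf i0 with hc0
  have hc0pos : 0 < c0 := div_pos (hπpos i0) (hμfpos i0)
  have hc0le : ∀ i, c0 * μf i ≤ π i := by
    intro i
    have h1 := hi0 i (Finset.mem_univ i)
    rw [le_div_iff₀ (hμfpos i)] at h1
    linarith
  -- pointwise change-of-measure bound
  set K2 : ℝ := Isum a θf + η/2 with hK2
  have hpath : ∀ (m : ℕ) (x : Fin (m+2) → Fin n), empNC x ∈ Ball →
      c0 * Real.exp (-(((m:ℝ)+1)) * K2) * pathPA μf bf x ≤ pathPA π a x := by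
    intro m x hxB
    have hdist : dist2v (empNC x) θf ≤ δ := le_of_lt hxB.2
    set P : ℝ := ∏ i, ∏ j, a i j ^ Nc x i j with hP
    set Q : ℝ := ∏ i, ∏ j, bf i j ^ Nc x i j with hQ
    have hPpos : 0 < P := Finset.prod_pos fun i _ =>
      Finset.prod_pos fun j _ => pow_pos (hapos i j) _
    have hQpos : 0 < Q := Finset.prod_pos fun i _ =>
      Finset.prod_pos fun j _ => pow_pos (hbfpos i j) _
    have hlogP : Real.log P = ∑ i, ∑ j, (Nc x i j : ℝ) * Real.log (a i j) := by
      rw [hP, Real.log_prod (fun i _ => ne_of_gt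
        (Finset.prod_pos fun j _ => pow_pos (hapos i j) _))]
      refine Finset.sum_congr rfl fun i _ => ?_
      rw [Real.log_prod (fun j _ => ne_of_gt (pow_pos (hapos i j) _))]
      exact Finset.sum_congr rfl fun j _ => Real.log_pow _ _
    have hlogQ : Real.log Q = ∑ i, ∑ j, (Nc x i j : ℝ) * Real.log (bf i j) := by
      rw [hQ, Real.log_prod (fun i _ => ne_of_gt
        (Finset.prod_pos fun j _ => pow_pos (hbfpos i j) _))]
      refine Finset.sum_congr rfl fun i _ => ?_
      rw [Real.log_prod (fun j _ => ne_of_gt (pow_pos (hbfpos i j) _))]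
      exact Finset.sum_congr rfl fun j _ => Real.log_pow _ _
    have hkey : Real.log Q - Real.log P ≤ ((m:ℝ)+1) * K2 := by
      rw [hlogP, hlogQ, ← Finset.sum_sub_distrib]
      have hterm : ∀ i : Fin n, (∑ j, (Nc x i j : ℝ) * Real.log (bf i j))
            - (∑ j, (Nc x i j : ℝ) * Real.log (a i j))
          = ∑ j, ((m:ℝ)+1) * (empNC x i j * Real.log (bf i j / a i j)) := by
        intro i
        rw [← Finset.sum_sub_distrib]
        refine Finset.sum_congr rfl fun j _ => ?_
        rw [Real.log_div (ne_of_gt (hbfpos i j)) (ne_of_gt (hapos i j))]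
        have hNc : ((m:ℝ)+1) * empNC x i j = (Nc x i j : ℝ) := by
          rw [empNC_eq]
          field_simp
        rw [← hNc]
        ring
      rw [Finset.sum_congr rfl fun i _ => hterm i]
      have hfac : ∑ i, ∑ j, ((m:ℝ)+1) * (empNC x i j * Real.log (bf i j / a i j))
          = ((m:ℝ)+1) * ∑ i, ∑ j, empNC x i j * Real.log (bf i j / a i j) := by
        rw [Finset.mul_sum]
        exact Finset.sum_congr rfl fun i _ => (Finset.mul_sum _ _ _).symm
      rw [hfac]
      have hsum_le : ∑ i, ∑ j, empNC x i j * Real.log (bf i j / a i j) ≤ K2 := by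
        have hIsum : ∑ i, ∑ j, θf i j * Real.log (bf i j / a i j) = Isum a θf := by
          unfold Isum
          rw [← hbf]
        have hdiff : ∑ i, ∑ j, (empNC x i j - θf i j) * Real.log (bf i j / a i j)
            ≤ C * δ := by
          calc ∑ i, ∑ j, (empNC x i j - θf i j) * Real.log (bf i j / a i j)
              ≤ ∑ i, ∑ j, |Real.log (bf i j / a i j)| * δ := by
                refine Finset.sum_le_sum fun i _ => Finset.sum_le_sum fun j _ => ?_
                calc (empNC x i j - θf i j) * Real.log (bf i j / a i j)
                    ≤ |(empNC x i j - θf i j) * Real.log (bf i j / a i j)| := le_abs_self _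
                  _ = |empNC x i j - θf i j| * |Real.log (bf i j / a i j)| := abs_mul _ _
                  _ ≤ δ * |Real.log (bf i j / a i j)| := by
                      refine mul_le_mul_of_nonneg_right ?_ (abs_nonneg _)
                      exact (abs_le_dist2v _ _ i j).trans hdist
                  _ = |Real.log (bf i j / a i j)| * δ := mul_comm _ _
            _ = C * δ := by
                rw [hC, Finset.sum_mul]
                exact Finset.sum_congr rfl fun i _ => (Finset.sum_mul _ _ _).symm
        have hsplit2 : ∑ i, ∑ j, empNC x i j * Real.log (bf i j / a i j)
            = (∑ i, ∑ j, θf i j * Real.log (bf i j / a i j))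
              + ∑ i, ∑ j, (empNC x i j - θf i j) * Real.log (bf i j / a i j) := by
          rw [← Finset.sum_add_distrib]
          refine Finset.sum_congr rfl fun i _ => ?_
          rw [← Finset.sum_add_distrib]
          exact Finset.sum_congr rfl fun j _ => by ring
        rw [hsplit2, hIsum, hK2]
        linarith [hdiff.trans hCδ]
      exact mul_le_mul_of_nonneg_left hsum_le (by positivity)
    have hEQ : Real.exp (-(((m:ℝ)+1)) * K2) * Q ≤ P := by
      rw [← Real.exp_log hPpos, ← Real.exp_log hQpos, ← Real.exp_add]
      exact Real.exp_le_exp.2 (by linarith)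
    unfold pathPA
    rw [prod_steps a x, prod_steps bf x, ← hP, ← hQ]
    calc c0 * Real.exp (-(((m:ℝ)+1)) * K2) * (μf (x 0) * Q)
        = (c0 * μf (x 0)) * (Real.exp (-(((m:ℝ)+1)) * K2) * Q) := by ring
      _ ≤ π (x 0) * P :=
          mul_le_mul (hc0le (x 0)) hEQ
            (mul_nonneg (Real.exp_nonneg _) hQpos.le) (hπ.1 _)
  -- summation over the ball
  have hPrlow : ∀ᶠ m : ℕ in atTop,
      c0 * Real.exp (-(((m:ℝ)+1)) * K2) * (1/2) ≤ prEventNC π a m Γ := by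
    filter_upwards [hbig] with m hm
    have h1 : prEventNC π a m Ball ≤ prEventNC π a m Γ := by
      rw [prEventNC, prEventNC]
      refine Finset.sum_le_sum fun x _ => ?_
      by_cases hB : empNC x ∈ Ball
      · rw [if_pos hB, if_pos (hBallΓ hB)]
      · rw [if_neg hB]
        split
        · exact pathPA_nonneg π a hπ.1 (fun i j => (hapos i j).le) x
        · exact le_rfl
    have h2 : c0 * Real.exp (-(((m:ℝ)+1)) * K2) * prEventNC μf bf m Ball
        ≤ prEventNC π a m Ball := by
      rw [prEventNC, prEventNC, Finset.mul_sum]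
      refine Finset.sum_le_sum fun x _ => ?_
      by_cases hB : empNC x ∈ Ball
      · rw [if_pos hB, if_pos hB]
        exact hpath m x hB
      · rw [if_neg hB, if_neg hB, mul_zero]
    have h3 : c0 * Real.exp (-(((m:ℝ)+1)) * K2) * (1/2)
        ≤ c0 * Real.exp (-(((m:ℝ)+1)) * K2) * prEventNC μf bf m Ball :=
      mul_le_mul_of_nonneg_left hm (by positivity)
    linarith
  -- pass to the liminf
  set r : ℕ → ℝ := fun m =>
    ((m:ℝ)+2)⁻¹ * (Real.log (c0 * (1/2)) - ((m:ℝ)+1) * K2) with hr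
  have hrF : ∀ᶠ m : ℕ in atTop, ((r m : ℝ) : EReal) ≤ F m := by
    filter_upwards [hPrlow] with m hm
    have hLpos : (0:ℝ) < c0 * Real.exp (-(((m:ℝ)+1)) * K2) * (1/2) := by positivity
    have hPrpos : 0 < prEventNC π a m Γ := lt_of_lt_of_le hLpos hm
    simp only [hF]
    rw [F_eq_coe _ hPrpos, EReal.coe_le_coe_iff]
    have hlogL : Real.log (c0 * Real.exp (-(((m:ℝ)+1)) * K2) * (1/2))
        = Real.log (c0 * (1/2)) - ((m:ℝ)+1) * K2 := by
      rw [show c0 * Real.exp (-(((m:ℝ)+1)) * K2) * (1/2)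
          = (c0 * (1/2)) * Real.exp (-(((m:ℝ)+1)) * K2) by ring]
      rw [Real.log_mul (by positivity) (ne_of_gt (Real.exp_pos _)), Real.log_exp]
      ring
    have hloge : Real.log (c0 * Real.exp (-(((m:ℝ)+1)) * K2) * (1/2))
        ≤ Real.log (prEventNC π a m Γ) := Real.log_le_log hLpos hm
    rw [hlogL] at hloge
    simp only [hr]
    exact mul_le_mul_of_nonneg_left hloge (by positivity)
  have hrlim : Tendsto r atTop (nhds (-K2)) := by
    have heq : ∀ m : ℕ, r m
        = Real.log (c0 * (1/2)) * ((m:ℝ)+2)⁻¹ - K2 * (((m:ℝ)+1)/((m:ℝ)+2)) := by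
      intro m
      simp only [hr]
      have hm2 : ((m:ℝ)+2) ≠ 0 := by positivity
      field_simp
    rw [funext heq]
    have := (tendsto_inv_m2.const_mul (Real.log (c0 * (1/2)))).sub
      (tendsto_ratio12.const_mul K2)
    simpa using this
  have h1 : Filter.liminf (fun m : ℕ => ((r m : ℝ) : EReal)) atTop = ((-K2 : ℝ) : EReal) :=
    (EReal.tendsto_coe.2 hrlim).liminf_eq
  have h2 : Filter.liminf (fun m : ℕ => ((r m : ℝ) : EReal)) atTop
      ≤ Filter.liminf F atTop := Filter.liminf_le_liminf hrF
  have h3 : ((-(Isum a θf) - η : ℝ) : EReal) ≤ ((-K2 : ℝ) : EReal) := by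
    rw [EReal.coe_le_coe_iff, hK2]
    linarith
  calc ((-(Isum a θf) - η : ℝ) : EReal) ≤ ((-K2 : ℝ) : EReal) := h3
    _ = Filter.liminf (fun m : ℕ => ((r m : ℝ) : EReal)) atTop := h1.symm
    _ ≤ Filter.liminf F atTop := h2

/-- the lower bound half of the LDP -/
theorem lowerLB (π : Fin n → ℝ) (a : Fin n → Fin n → ℝ)
    (hπ : (∀ i, 0 ≤ π i) ∧ ∑ i, π i = 1)
    (hapos : ∀ i j, 0 < a i j) (harow : ∀ i, ∑ j, a i j = 1)
    (hinv : ∀ j, ∑ i, π i * a i j = π j)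
    (Γ : Set (Fin n → Fin n → ℝ)) (hΓ : Γ ⊆ simplex2 n)
    (hop : OpenIn2 (simplex2 n) Γ) :
    -(⨅ θ ∈ Γ, rate16 a θ)
      ≤ Filter.liminf
          (fun m : ℕ => ((((m:ℝ)+2)⁻¹ : ℝ) : EReal) * elog (prEventNC π a m Γ))
          Filter.atTop := by
  classical
  set L := Filter.liminf
      (fun m : ℕ => ((((m:ℝ)+2)⁻¹ : ℝ) : EReal) * elog (prEventNC π a m Γ))
      Filter.atTop with hL
  rw [EReal.neg_le]
  refine le_iInf₂ fun θ0 hθ0 => ?_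
  rw [EReal.neg_le]
  -- if θ0 is not stationary the rate is ⊤ and the claim is trivial
  by_cases hstat : IsStat2 θ0
  swap
  · rw [rate16, if_neg hstat]
    simp
  have hθ0s : θ0 ∈ simplex2 n := hΓ hθ0
  have hθ0nn : ∀ i j, 0 ≤ θ0 i j := hθ0s.1
  rw [rate16_eq hθ0nn hstat, ← EReal.coe_neg]
  -- π is strictly positive
  have hπpos : ∀ i, 0 < π i := by
    have hex : ∃ i, 0 < π i := by
      by_contra h
      push_neg at h
      have : ∑ i, π i ≤ 0 := Finset.sum_nonpos fun i _ => h i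
      rw [hπ.2] at this
      linarith
    obtain ⟨i1, hi1⟩ := hex
    intro j
    have h1 : π i1 * a i1 j ≤ ∑ i, π i * a i j :=
      Finset.single_le_sum (f := fun i => π i * a i j)
        (fun i _ => mul_nonneg (hπ.1 i) (hapos i j).le) (Finset.mem_univ i1)
    rw [hinv j] at h1
    exact lt_of_lt_of_le (mul_pos hi1 (hapos i1 j)) h1
  -- key: for every η > 0 the claim holds up to η
  have key : ∀ η : ℝ, 0 < η → ((-(Isum a θ0) - η : ℝ) : EReal) ≤ L := by
    intro η hη
    set u : Fin n → Fin n → ℝ := fun i j => π i * a i j with hu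
    have husum : ∑ i, ∑ j, u i j = 1 := by
      rw [hu]
      have : ∀ i : Fin n, ∑ j, π i * a i j = π i := by
        intro i
        rw [← Finset.mul_sum, harow i, mul_one]
      rw [Finset.sum_congr rfl fun i _ => this i]
      exact hπ.2
  -- continuity of the rate along the segment towards u
    obtain ⟨ε0, hε0, hball0⟩ := hop θ0 hθ0
    set g : ℝ → ℝ := fun t => Itilde a (fun i j => (1-t) * θ0 i j + t * u i j) with hg
    have hgc : ContinuousAt g 0 := by
      have h1 : Continuous (fun t : ℝ => (fun i j => (1-t) * θ0 i j + t * u i j)) := by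
        refine continuous_pi fun i => continuous_pi fun j => ?_
        exact ((continuous_const.sub continuous_id).mul continuous_const).add
          (continuous_id.mul continuous_const)
      exact ((continuous_Itilde a).comp h1).continuousAt
    have hg0 : g 0 = Itilde a θ0 := by
      rw [hg]
      simp
    obtain ⟨dt, hdt, hgdt⟩ : ∃ dt > 0, ∀ t : ℝ, |t - 0| < dt → |g t - g 0| < η/2 := by
      have := Metric.continuousAt_iff.1 hgc (η/2) (by positivity)
      obtain ⟨dt, hdt, h⟩ := this
      exact ⟨dt, hdt, fun t ht => by
        have := h (show dist t 0 < dt by rwa [Real.dist_eq])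
        rwa [Real.dist_eq] at this⟩
    set t : ℝ := min (dt/2) (min (1/2) (ε0/4)) with ht
    have htpos : 0 < t := by
      apply lt_min (by positivity) (lt_min (by norm_num) (by positivity))
    have hthalf : t ≤ 1/2 := le_trans (min_le_right _ _) (min_le_left _ _)
    have htε0 : t ≤ ε0/4 := le_trans (min_le_right _ _) (min_le_right _ _)
    have htdt : t < dt := lt_of_le_of_lt (min_le_left _ _) (by linarith)
    set θf : Fin n → Fin n → ℝ := fun i j => (1-t) * θ0 i j + t * u i j with hθf
    have hθfpos : ∀ i j, 0 < θf i j := by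
      intro i j
      have h1 : 0 ≤ (1-t) * θ0 i j := mul_nonneg (by linarith) (hθ0nn i j)
      have h2 : 0 < t * u i j := mul_pos htpos (mul_pos (hπpos i) (hapos i j))
      simp only [hθf]
      linarith
    have hθfsum : ∑ i, ∑ j, θf i j = 1 := by
      simp only [hθf]
      have : ∀ i : Fin n, ∑ j, ((1-t) * θ0 i j + t * u i j)
          = (1-t) * (∑ j, θ0 i j) + t * (∑ j, u i j) := by
        intro i
        rw [Finset.sum_add_distrib, Finset.mul_sum, Finset.mul_sum]
      rw [Finset.sum_congr rfl fun i _ => this i, Finset.sum_add_distrib]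
      have h1 : ∑ i, (1-t) * (∑ j, θ0 i j) = (1-t) := by
        rw [← Finset.mul_sum, hθ0s.2, mul_one]
      have h2 : ∑ i, t * (∑ j, u i j) = t := by
        rw [← Finset.mul_sum, husum, mul_one]
      rw [h1, h2]
      ring
    have hθfstat : IsStat2 θf := by
      intro i
      have hustat : ∑ j, u i j = ∑ j, u j i := by
        have h1 : ∑ j, u i j = π i := by
          simp only [hu]
          rw [← Finset.mul_sum, harow i, mul_one]
        have h2 : ∑ j, u j i = π i := by
          simp only [hu]
          exact hinv i
        rw [h1, h2]
      have hrow : ∑ j, θf i j = (1-t) * (∑ j, θ0 i j) + t * (∑ j, u i j) := by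
        simp only [hθf]
        rw [Finset.sum_add_distrib, ← Finset.mul_sum, ← Finset.mul_sum]
      have hcol : ∑ j, θf j i = (1-t) * (∑ j, θ0 j i) + t * (∑ j, u j i) := by
        simp only [hθf]
        rw [Finset.sum_add_distrib, ← Finset.mul_sum, ← Finset.mul_sum]
      rw [hrow, hcol, hustat, hstat i]
    have hθfsimp : θf ∈ simplex2 n := ⟨fun i j => (hθfpos i j).le, hθfsum⟩
    have hθfΓ : θf ∈ Γ := by
      apply hball0 θf hθfsimp
      have hd : dist2v θf θ0 = t * ∑ i, ∑ j, |u i j - θ0 i j| := by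
        unfold dist2v
        rw [Finset.mul_sum]
        refine Finset.sum_congr rfl fun i _ => ?_
        rw [Finset.mul_sum]
        refine Finset.sum_congr rfl fun j _ => ?_
        simp only [hθf]
        rw [show (1-t) * θ0 i j + t * u i j - θ0 i j = t * (u i j - θ0 i j) by ring,
          abs_mul, abs_of_pos htpos]
      have hsum2 : ∑ i, ∑ j, |u i j - θ0 i j| ≤ 2 := by
        have h1 : ∀ i j : Fin n, |u i j - θ0 i j| ≤ u i j + θ0 i j := by
          intro i j
          have h2 : 0 ≤ u i j := mul_nonneg (hπ.1 i) (hapos i j).le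
          have h3 := hθ0nn i j
          rw [abs_sub_le_iff]
          constructor <;> linarith
        calc ∑ i, ∑ j, |u i j - θ0 i j| ≤ ∑ i, ∑ j, (u i j + θ0 i j) :=
              Finset.sum_le_sum fun i _ => Finset.sum_le_sum fun j _ => h1 i j
          _ = 2 := by
              rw [Finset.sum_congr rfl fun i _ => Finset.sum_add_distrib,
                Finset.sum_add_distrib, husum, hθ0s.2]
              norm_num
      rw [hd]
      calc t * ∑ i, ∑ j, |u i j - θ0 i j| ≤ t * 2 :=
            mul_le_mul_of_nonneg_left hsum2 htpos.le
        _ < ε0 := by linarith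
    have hgt : |Itilde a θf - Itilde a θ0| < η/2 := by
      have := hgdt t (by rwa [sub_zero, abs_of_pos htpos])
      rw [hg0] at this
      simpa [hg, hθf] using this
    have hlow := lower_aux π a hπ hπpos hapos harow Γ hop θf hθfΓ hθfpos hθfstat hθfsum
      (η/2) (by positivity)
    rw [hL]
    refine le_trans ?_ hlow
    rw [EReal.coe_le_coe_iff]
    have hIf : Isum a θf = Itilde a θf := Isum_eq_Itilde hapos fun i j => (hθfpos i j).le
    have hI0 : Isum a θ0 = Itilde a θ0 := Isum_eq_Itilde hapos hθ0nn
    rw [hIf, hI0]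
    have habs := abs_lt.1 hgt
    linarith [habs.1, habs.2]
  -- conclude by letting η → 0
  by_contra hcon
  push_neg at hcon
  obtain ⟨c, hc1, hc2⟩ := EReal.exists_between_coe_real hcon
  have hη : 0 < -(Isum a θ0) - c := by
    rw [EReal.coe_lt_coe_iff] at hc2
    linarith
  have := key (-(Isum a θ0) - c) hη
  have heq : ((-(Isum a θ0) - (-(Isum a θ0) - c) : ℝ) : EReal) = (c : EReal) := by
    norm_num
  rw [heq] at this
  exact absurd (lt_of_le_of_lt this hc1) (lt_irrefl _)

end Stmt16Aux

/-- For a stationary Markov chain with transition matrix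
`a_{ij} > 0` and stationary distribution `π`, the non-cyclic empirical doublet measures
`θ(x_1^l) ∈ S_{n²}` satisfy the LDP with rate function
`I(θ) = Σ_i θ̄_i Σ_j b_{ij} log(b_{ij}/a_{ij})` for `θ ∈ M_s(A²)` and `I(θ) = +∞`
for `θ ∈ S_{n²} \ M_s(A²)`. -/
theorem stmt16 {n : ℕ} (π : Fin n → ℝ) (a : Fin n → Fin n → ℝ)
    (hπ : (∀ i, 0 ≤ π i) ∧ ∑ i, π i = 1)
    (hapos : ∀ i j, 0 < a i j) (harow : ∀ i, ∑ j, a i j = 1)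
    (hinv : ∀ j, ∑ i, π i * a i j = π j) :
    (∀ Γ : Set (Fin n → Fin n → ℝ), Γ ⊆ simplex2 n → OpenIn2 (simplex2 n) Γ →
      -(⨅ θ ∈ Γ, rate16 a θ)
        ≤ Filter.liminf
            (fun m : ℕ => ((((m:ℝ)+2)⁻¹ : ℝ) : EReal) * elog (prEventNC π a m Γ))
            Filter.atTop) ∧
    (∀ Γ : Set (Fin n → Fin n → ℝ), Γ ⊆ simplex2 n → ClosedIn2 (simplex2 n) Γ →
      Filter.limsup
          (fun m : ℕ => ((((m:ℝ)+2)⁻¹ : ℝ) : EReal) * elog (prEventNC π a m Γ))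
          Filter.atTop
        ≤ -(⨅ θ ∈ Γ, rate16 a θ)) := by
  constructor
  · intro Γ hΓ hop
    exact Stmt16Aux.lowerLB π a hπ hapos harow hinv Γ hΓ hop
  · intro Γ hΓ hcl
    exact Stmt16Aux.upperUB π a hπ hapos harow Γ hΓ hcl
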